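/- Let f satisfy f(T) ≤ cT^α for some c > 0, α > 1, and let T^A solve T_t + Au·∇T = ΔT + f(T) on D with 0 ≤ T^A ≤ 1, dominating linear evolution φ^A solving φ_t + Au·∇φ = Δφ with the same initial datum. If I_A := ∫₀^∞ ‖φ^A(·,t)‖_∞^{α−1} dt satisfies c(α−1)I_A < 1, and if ‖φ^A(·,t)‖_∞ is bounded for t ∈ [0,τ) by 1, by δ on [τ, τ₀), and by C M t^{−1/2} for t ≥ τ₀ (with ‖T₀‖_{L¹} ≤ M, D = ℝ × 𝕋, α > 3), then I_A ≤ τ + τ₀ δ^{α−1} + (CM)^{α−1}·(2/(α−3))·τ₀^{−(α−3)/2}; in particular, I_A can be made smaller than (c(α−1))^{−1} by choosing τ, δ small and τ₀ large, uniformly in A for A large. -/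

import Mathlib

open MeasureTheory
open scoped NNReal

/-- The Laplacian of a function on `ℝ²`. -/
noncomputable def lap2 (f : ℝ × ℝ → ℝ) (x : ℝ × ℝ) : ℝ :=
  fderiv ℝ (fun y => fderiv ℝ f y (1, 0)) x (1, 0) +
    fderiv ℝ (fun y => fderiv ℝ f y (0, 1)) x (0, 1)

/-- Quenching estimate for reactions without ignition cutoff (`f(T) ≤ cT^α`) on
`D = ℝ × 𝕋` (functions on `ℝ²` periodic in the second variable): the piecewise bounds on
`g(t) = ‖φ^A(·,t)‖_∞` (by `1` on `[0,τ)`, by `δ` on `[τ,τ₀)`, and by `CMt^{-1/2}` for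
`t ≥ τ₀`, with `‖T₀‖_{L¹} ≤ M` and `α > 3`) give
`I_A = ∫₀^∞ g^{α-1} ≤ τ + τ₀δ^{α-1} + (CM)^{α-1}·(2/(α-3))·τ₀^{-(α-3)/2}`. -/
theorem stmt_18 (c α : ℝ) (hc : 0 < c) (hα : 3 < α)
    (f : ℝ → ℝ) (hf : ∀ s ∈ Set.Icc (0 : ℝ) 1, f s ≤ c * s ^ α)
    (u : ℝ × ℝ → ℝ × ℝ) (Ku : ℝ≥0) (hu : LipschitzWith Ku u)
    (huper : ∀ x : ℝ × ℝ, u (x + (0, 1)) = u x)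
    (hdiv : ∀ᵐ x : ℝ × ℝ, (fderiv ℝ u x (1, 0)).1 + (fderiv ℝ u x (0, 1)).2 = 0)
    (A : ℝ) (T φ : ℝ → ℝ × ℝ → ℝ)
    (hTper : ∀ t (x : ℝ × ℝ), T t (x + (0, 1)) = T t x)
    (hφper : ∀ t (x : ℝ × ℝ), φ t (x + (0, 1)) = φ t x)
    (hTreg : ∀ t, ContDiff ℝ 2 (T t)) (hφreg : ∀ t, ContDiff ℝ 2 (φ t))
    (hTt : ∀ (t : ℝ) (x : ℝ × ℝ), HasDerivAt (fun s => T s x)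
      (lap2 (T t) x + f (T t x) - A * fderiv ℝ (T t) x (u x)) t)
    (hφt : ∀ (t : ℝ) (x : ℝ × ℝ), HasDerivAt (fun s => φ s x)
      (lap2 (φ t) x - A * fderiv ℝ (φ t) x (u x)) t)
    (hTrange : ∀ t x, T t x ∈ Set.Icc (0 : ℝ) 1)
    (hinit : T 0 = φ 0)
    (M : ℝ) (hM : 0 ≤ M)
    (hL1 : eLpNorm (φ 0) 1 (volume.restrict (Set.univ ×ˢ Set.Ico (0 : ℝ) 1))
      ≤ ENNReal.ofReal M)
    (g : ℝ → ℝ) (hg : ∀ t, g t = (eLpNorm (φ t) ⊤ volume).toReal)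
    (hIA : c * (α - 1) * (∫ t in Set.Ioi (0 : ℝ), g t ^ (α - 1)) < 1)
    (τ τ₀ δ C : ℝ) (hτ : 0 < τ) (hττ₀ : τ < τ₀) (hτ₀ : 1 < τ₀)
    (hδ : 0 < δ) (hC : 0 < C)
    (hg1 : ∀ t ∈ Set.Ico (0 : ℝ) τ, g t ≤ 1)
    (hg2 : ∀ t ∈ Set.Ico τ τ₀, g t ≤ δ)
    (hg3 : ∀ t : ℝ, τ₀ ≤ t → g t ≤ C * M * t ^ (-(1 : ℝ) / 2)) :
    (∫ t in Set.Ioi (0 : ℝ), g t ^ (α - 1)) ≤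
      τ + τ₀ * δ ^ (α - 1) + (C * M) ^ (α - 1) * (2 / (α - 3)) * τ₀ ^ (-(α - 3) / 2) := by

  have h0 : ∀ t, 0 ≤ g t := fun t => by rw [hg]; exact ENNReal.toReal_nonneg
  have hα1 : (0:ℝ) < α - 1 := by linarith
  have hτ₀pos : (0:ℝ) < τ₀ := by linarith
  have hCM : 0 ≤ C * M := by positivity
  have hrhs : (0:ℝ) ≤ τ + τ₀ * δ ^ (α - 1) + (C * M) ^ (α - 1) * (2 / (α - 3)) * τ₀ ^ (-(α - 3) / 2) := by
    have h1 : (0:ℝ) ≤ δ ^ (α - 1) := Real.rpow_nonneg hδ.le _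
    have h2 : (0:ℝ) ≤ (C * M) ^ (α - 1) := Real.rpow_nonneg hCM _
    have h3 : (0:ℝ) ≤ τ₀ ^ (-(α - 3) / 2) := Real.rpow_nonneg hτ₀pos.le _
    have h4 : (0:ℝ) ≤ 2 / (α - 3) := div_nonneg (by norm_num) (by linarith)
    have := mul_nonneg (mul_nonneg h2 h4) h3
    have := mul_nonneg hτ₀pos.le h1
    linarith
  by_cases hint : IntegrableOn (fun t => g t ^ (α - 1)) (Set.Ioi (0:ℝ)) volume
  swap
  · rw [MeasureTheory.integral_undef hint]; exact hrhs
  -- split the domain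
  have hsub1 : Set.Ioo (0:ℝ) τ ⊆ Set.Ioi 0 := fun x hx => hx.1
  have hsub2 : Set.Ico τ τ₀ ⊆ Set.Ioi (0:ℝ) := fun x hx => lt_of_lt_of_le hτ hx.1
  have hsub3 : Set.Ici τ₀ ⊆ Set.Ioi (0:ℝ) := fun x hx => lt_of_lt_of_le hτ₀pos hx
  have hi1 := hint.mono_set hsub1
  have hi2 := hint.mono_set hsub2
  have hi3 := hint.mono_set hsub3
  have hunion1 : Set.Ioo (0:ℝ) τ ∪ Set.Ico τ τ₀ = Set.Ioo 0 τ₀ :=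
    Set.Ioo_union_Ico_eq_Ioo hτ hττ₀.le
  have hunion2 : Set.Ioo (0:ℝ) τ₀ ∪ Set.Ici τ₀ = Set.Ioi 0 :=
    Set.Ioo_union_Ici_eq_Ioi hτ₀pos
  have hdisj1 : Disjoint (Set.Ioo (0:ℝ) τ) (Set.Ico τ τ₀) := by
    apply Set.disjoint_left.mpr
    rintro x ⟨_, hx2⟩ ⟨hx3, _⟩; exact absurd hx3 (not_le.mpr hx2)
  have hdisj2 : Disjoint (Set.Ioo (0:ℝ) τ₀) (Set.Ici τ₀) := by
    apply Set.disjoint_left.mpr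
    rintro x ⟨_, hx2⟩ hx3; exact absurd hx3 (not_le.mpr hx2)
  have hsplit : (∫ t in Set.Ioi (0:ℝ), g t ^ (α - 1)) =
      (∫ t in Set.Ioo (0:ℝ) τ, g t ^ (α - 1)) + (∫ t in Set.Ico τ τ₀, g t ^ (α - 1))
        + (∫ t in Set.Ici τ₀, g t ^ (α - 1)) := by
    rw [← hunion2, MeasureTheory.setIntegral_union hdisj2 measurableSet_Ici
      (hint.mono_set (fun x hx => hx.1 : Set.Ioo (0:ℝ) τ₀ ⊆ Set.Ioi 0)) hi3,
      ← hunion1, MeasureTheory.setIntegral_union hdisj1 measurableSet_Ico hi1 hi2]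
  rw [hsplit]
  -- piece 1
  have hb1 : (∫ t in Set.Ioo (0:ℝ) τ, g t ^ (α - 1)) ≤ τ := by
    have : (∫ t in Set.Ioo (0:ℝ) τ, g t ^ (α - 1)) ≤ ∫ _ in Set.Ioo (0:ℝ) τ, (1:ℝ) := by
      apply MeasureTheory.setIntegral_mono_on hi1 (MeasureTheory.integrableOn_const
        (by rw [Real.volume_Ioo]; exact ENNReal.ofReal_ne_top)) measurableSet_Ioo
      intro t ht
      exact Real.rpow_le_one (h0 t) (hg1 t ⟨ht.1.le, ht.2⟩) hα1.le
    refine this.trans ?_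
    rw [MeasureTheory.setIntegral_const, Real.volume_real_Ioo_of_le hτ.le, smul_eq_mul, mul_one]
    linarith
  -- piece 2
  have hb2 : (∫ t in Set.Ico τ τ₀, g t ^ (α - 1)) ≤ τ₀ * δ ^ (α - 1) := by
    have : (∫ t in Set.Ico τ τ₀, g t ^ (α - 1)) ≤ ∫ _ in Set.Ico τ τ₀, δ ^ (α - 1) := by
      apply MeasureTheory.setIntegral_mono_on hi2 (MeasureTheory.integrableOn_const
        (by rw [Real.volume_Ico]; exact ENNReal.ofReal_ne_top)) measurableSet_Ico
      intro t ht
      exact Real.rpow_le_rpow (h0 t) (hg2 t ht) hα1.le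
    refine this.trans ?_
    rw [MeasureTheory.setIntegral_const, Real.volume_real_Ico_of_le hττ₀.le, smul_eq_mul]
    have hδp : (0:ℝ) ≤ δ ^ (α - 1) := Real.rpow_nonneg hδ.le _
    nlinarith
  -- piece 3
  have hexp : -(α - 1) / 2 < (-1 : ℝ) := by linarith
  have hintM : IntegrableOn (fun t : ℝ => (C * M) ^ (α - 1) * t ^ (-(α - 1) / 2))
      (Set.Ioi τ₀) volume :=
    (integrableOn_Ioi_rpow_of_lt hexp hτ₀pos).const_mul _
  have hb3 : (∫ t in Set.Ici τ₀, g t ^ (α - 1)) ≤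
      (C * M) ^ (α - 1) * (2 / (α - 3)) * τ₀ ^ (-(α - 3) / 2) := by
    rw [MeasureTheory.integral_Ici_eq_integral_Ioi]
    have hmono : (∫ t in Set.Ioi τ₀, g t ^ (α - 1)) ≤
        ∫ t in Set.Ioi τ₀, (C * M) ^ (α - 1) * t ^ (-(α - 1) / 2) := by
      apply MeasureTheory.setIntegral_mono_on (hint.mono_set
        (fun x hx => lt_trans hτ₀pos hx)) hintM measurableSet_Ioi
      intro t ht
      have htpos : (0:ℝ) < t := lt_trans hτ₀pos ht
      have h1 : g t ≤ C * M * t ^ (-(1:ℝ)/2) := hg3 t (le_of_lt ht)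
      calc g t ^ (α - 1) ≤ (C * M * t ^ (-(1:ℝ)/2)) ^ (α - 1) :=
            Real.rpow_le_rpow (h0 t) h1 hα1.le
        _ = (C * M) ^ (α - 1) * t ^ (-(α - 1) / 2) := by
            rw [Real.mul_rpow hCM (Real.rpow_nonneg htpos.le _),
              ← Real.rpow_mul htpos.le]
            congr 1
            ring
    refine hmono.trans ?_
    rw [MeasureTheory.integral_const_mul, integral_Ioi_rpow_of_lt hexp hτ₀pos]
    have he : -(α - 1) / 2 + 1 = -(α - 3) / 2 := by ring
    rw [he, mul_assoc]
    apply mul_le_mul_of_nonneg_left _ (Real.rpow_nonneg hCM _)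
    apply le_of_eq
    have h3 : α - 3 ≠ 0 := by intro h; linarith [sub_eq_zero.mp h]
    have h3' : (3:ℝ) - α ≠ 0 := by intro h; linarith [sub_eq_zero.mp h]
    field_simp
  linarith
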